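/- arXiv:1610.08623 — 2 statements merged into one kernel-verified Lean document; each statement's English description precedes it below -/
import Mathlib

section
/- Let H be a real Hilbert space, x₁,…,x_N ∈ H, and let V = span{x₁,…,x_N}. Suppose J : H → ℝ has the form J(f) = R(⟨f,x₁⟩,…,⟨f,x_N⟩) + Ω(‖f‖) where Ω : ℝ≥0 → ℝ is monotone nondecreasing and R : ℝ^N → ℝ is arbitrary. If J attains a minimum on H, then J attains a minimum at some point of V. -/
theorem stmt_2 {H : Type*} [NormedAddCommGroup H] [InnerProductSpace ℝ H] [CompleteSpace H]
    (N : ℕ) (x : Fin N → H) (R : (Fin N → ℝ) → ℝ) (Ω : ℝ → ℝ) (hΩ : Monotone Ω)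
    (J : H → ℝ)
    (hJ : ∀ f, J f = R (fun i => inner ℝ f (x i)) + Ω ‖f‖)
    (hmin : ∃ f₀, ∀ f, J f₀ ≤ J f) :
    ∃ v ∈ Submodule.span ℝ (Set.range x), ∀ f, J v ≤ J f := by
  obtain ⟨f₀, hf₀⟩ := hmin
  set K : Submodule ℝ H := Submodule.span ℝ (Set.range x) with hK
  haveI : FiniteDimensional ℝ K := FiniteDimensional.span_of_finite ℝ (Set.finite_range x)
  
  set v : H := (K.orthogonalProjectionOnto f₀ : H)
  refine ⟨v, (K.orthogonalProjectionOnto f₀).2, fun f => ?_⟩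
  have hxK : ∀ i, x i ∈ K := fun i => Submodule.subset_span ⟨i, rfl⟩
  have hperp : f₀ - v ∈ Kᗮ := K.sub_starProjection_mem_orthogonal f₀
  have hinner : ∀ i, (inner ℝ v (x i) : ℝ) = inner ℝ f₀ (x i) := by
    intro i
    have := hperp (x i) (hxK i)
    have h2 : (inner ℝ (f₀ - v) (x i) : ℝ) = 0 := by
      rwa [real_inner_comm]
    rw [inner_sub_left] at h2
    linarith
  have hnorm : ‖v‖ ≤ ‖f₀‖ := by
    simpa [v] using (K.orthogonalProjectionOnto).le_opNorm f₀ |>.trans (by simpa using mul_le_of_le_one_left (norm_nonneg f₀) (Submodule.orthogonalProjectionOnto_norm_le K))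
  calc J v = R (fun i => inner ℝ v (x i)) + Ω ‖v‖ := hJ v
    _ ≤ R (fun i => inner ℝ f₀ (x i)) + Ω ‖f₀‖ := by
        have : (fun i => (inner ℝ v (x i) : ℝ)) = fun i => inner ℝ f₀ (x i) :=
          funext hinner
        rw [this]
        exact add_le_add_right (hΩ hnorm) _
    _ = J f₀ := (hJ f₀).symm
    _ ≤ J f := hf₀ f
end

section
/- For all x, y ∈ [0,1], min(x,y) − x·y = ∑_{m=1}^∞ 2·sin(πmx)·sin(πmy)/(π²m²), with the series converging absolutely. -/
open Real

lemma bern2_eval (t : ℝ) :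
    (Polynomial.map (algebraMap ℚ ℝ) (Polynomial.bernoulli (2 * 1))).eval t = t ^ 2 - t + 1 / 6 := by
  simp [Polynomial.bernoulli_def, Finset.sum_range_succ, bernoulli_zero, bernoulli_one,
    bernoulli_eq_bernoulli'_of_ne_one (by norm_num : (2:ℕ) ≠ 1), bernoulli'_two]
  ring

lemma key_hasSum (x y : ℝ) (hx : x ∈ Set.Icc (0:ℝ) 1) (hy : y ∈ Set.Icc (0:ℝ) 1) :
    HasSum (fun m : ℕ+ => 2 * Real.sin (π * m * x) * Real.sin (π * m * y) / (π ^ 2 * m ^ 2))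
      (min x y - x * y) := by
  obtain ⟨hx0, hx1⟩ := hx
  obtain ⟨hy0, hy1⟩ := hy
  set u := |x - y| / 2 with hu
  set v := (x + y) / 2 with hv
  have hu01 : u ∈ Set.Icc (0:ℝ) 1 := by
    constructor
    · positivity
    · rw [hu]
      rcases le_total x y with h | h
      · rw [abs_of_nonpos (by linarith)]; linarith
      · rw [abs_of_nonneg (by linarith)]; linarith
  have hv01 : v ∈ Set.Icc (0:ℝ) 1 := ⟨by positivity, by rw [hv]; linarith⟩
  have h1 := hasSum_one_div_nat_pow_mul_cos one_ne_zero hu01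
  have h2 := hasSum_one_div_nat_pow_mul_cos one_ne_zero hv01
  rw [bern2_eval] at h1
  rw [bern2_eval] at h2
  have hd := (h1.sub h2).div_const (π ^ 2)
  -- rewrite the summand
  have heq : ∀ n : ℕ,
      (1 / (n : ℝ) ^ (2 * 1) * Real.cos (2 * π * n * u) -
        1 / (n : ℝ) ^ (2 * 1) * Real.cos (2 * π * n * v)) / π ^ 2
      = 2 * Real.sin (π * n * x) * Real.sin (π * n * y) / (π ^ 2 * n ^ 2) := by
    intro n
    have hcu : Real.cos (2 * π * n * u) = Real.cos (π * n * (x - y)) := by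
      rw [hu]
      rcases abs_cases (x - y) with ⟨h, _⟩ | ⟨h, _⟩
      · rw [h]; ring_nf
      · rw [h]
        rw [show 2 * π * n * (-(x - y) / 2) = -(π * n * (x - y)) by ring, Real.cos_neg]
    have hcv : Real.cos (2 * π * n * v) = Real.cos (π * n * (x + y)) := by
      rw [hv]; ring_nf
    rw [hcu, hcv]
    have := Real.cos_sub_cos (π * n * (x - y)) (π * n * (x + y))
    rw [show (π * n * (x - y) + π * n * (x + y)) / 2 = π * n * x by ring,
      show (π * n * (x - y) - π * n * (x + y)) / 2 = -(π * n * y) by ring,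
      Real.sin_neg] at this
    linear_combination this / (π ^ 2 * (n : ℝ) ^ (2 * 1))
  -- compute the sum value
  have hsumval : ((-1 : ℝ) ^ (1 + 1) * (2 * π) ^ (2 * 1) / 2 / (Nat.factorial (2 * 1)) * (u ^ 2 - u + 1 / 6) -
      (-1 : ℝ) ^ (1 + 1) * (2 * π) ^ (2 * 1) / 2 / (Nat.factorial (2 * 1)) * (v ^ 2 - v + 1 / 6)) / π ^ 2
      = min x y - x * y := by
    have hfact : ((Nat.factorial (2 * 1)) : ℝ) = 2 := by norm_num [Nat.factorial]
    have hpi : (π:ℝ) ^ 2 ≠ 0 := by positivity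
    rw [hfact]
    have huv : v - u = min x y := by
      rw [hu, hv]
      rcases le_total x y with h | h
      · rw [abs_of_nonpos (by linarith), min_eq_left h]; ring
      · rw [abs_of_nonneg (by linarith), min_eq_right h]; ring
    have husq : u ^ 2 - v ^ 2 = -(x * y) := by
      rw [hu, hv, div_pow, div_pow, sq_abs]; ring
    field_simp
    have hxy : x * y = v ^ 2 - u ^ 2 := by linarith
    rw [← huv, hxy]; ring
  rw [hsumval] at hd
  have hd' : HasSum (fun n : ℕ => 2 * Real.sin (π * n * x) * Real.sin (π * n * y) / (π ^ 2 * n ^ 2))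
      (min x y - x * y) := (funext heq) ▸ hd
  have h0 : ∀ n : ℕ, n ∉ Set.range (fun m : ℕ+ => (m : ℕ)) →
      2 * Real.sin (π * n * x) * Real.sin (π * n * y) / (π ^ 2 * n ^ 2) = 0 := by
    intro n hn
    have hn0 : n = 0 := by
      by_contra h
      exact hn ⟨⟨n, Nat.pos_of_ne_zero h⟩, rfl⟩
    subst hn0; simp
  have hfin := (Function.Injective.hasSum_iff
      (f := fun n : ℕ => 2 * Real.sin (π * n * x) * Real.sin (π * n * y) / (π ^ 2 * n ^ 2))
      (g := fun m : ℕ+ => (m : ℕ))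
      (fun a b hab => PNat.coe_injective hab) h0).mpr hd'
  exact hfin

theorem stmt_6 (x y : ℝ) (hx : x ∈ Set.Icc (0:ℝ) 1) (hy : y ∈ Set.Icc (0:ℝ) 1) :
    Summable (fun m : ℕ+ => |2 * Real.sin (π * m * x) * Real.sin (π * m * y) / (π ^ 2 * m ^ 2)|) ∧
    min x y - x * y
      = ∑' m : ℕ+, 2 * Real.sin (π * m * x) * Real.sin (π * m * y) / (π ^ 2 * m ^ 2) := by
  have h := key_hasSum x y hx hy
  refine ⟨?_, h.tsum_eq.symm⟩
  have hb : Summable (fun m : ℕ+ => 2 / π ^ 2 * ((m : ℝ) ^ 2)⁻¹) := by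
    refine Summable.mul_left _ ?_
    have : Summable (fun n : ℕ => ((n : ℝ) ^ 2)⁻¹) := by
      simpa using Real.summable_one_div_nat_pow.mpr (by norm_num : 1 < 2)
    exact this.comp_injective (fun a b hab => PNat.coe_injective hab)
  refine hb.of_nonneg_of_le (fun m => abs_nonneg _) (fun m => ?_)
  rw [abs_div, abs_of_nonneg (by positivity : (0:ℝ) ≤ π ^ 2 * m ^ 2)]
  rw [div_le_iff₀ (by positivity)]
  have h1 : |Real.sin (π * m * x)| ≤ 1 := Real.abs_sin_le_one _
  have h2 : |Real.sin (π * m * y)| ≤ 1 := Real.abs_sin_le_one _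
  have : |2 * Real.sin (π * m * x) * Real.sin (π * m * y)| ≤ 2 := by
    rw [abs_mul, abs_mul, abs_two]
    nlinarith [abs_nonneg (Real.sin (π * m * x)), abs_nonneg (Real.sin (π * m * y))]
  calc |2 * Real.sin (π * m * x) * Real.sin (π * m * y)| ≤ 2 := this
    _ = 2 / π ^ 2 * ((m:ℝ) ^ 2)⁻¹ * (π ^ 2 * m ^ 2) := by
        field_simp
end
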